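/- arXiv:2309.03765 — 4 statements merged into one kernel-verified Lean document; each statement's English description precedes it below -/
import Mathlib

section
/- Let M = SE₂(3) × (ℝ³ × ℝ³) and let C be the Two-Frame group of pairs (C, γ) with C ∈ SE₂(3), γ ∈ ℝ³ × ℝ³, product (C_X, γ_X)(C_Y, γ_Y) = (C_X C_Y, γ_X + A_X * γ_Y) where A_X is the rotation block of C_X and A * (γ₁, γ₂) = (A γ₁, A γ₂). Then the map φ : C × M → M defined by φ((C, γ), (P, b)) = (P C, Aᵀ * (b − γ)), where A is the rotation block of C, is a transitive right group action of C on M. -/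
open Matrix

noncomputable section

abbrev V3 := Fin 3 → ℝ
abbrev Mat3 := Matrix (Fin 3) (Fin 3) ℝ
abbrev Mat5 := Matrix (Fin 5) (Fin 5) ℝ

def SO3 (A : Mat3) : Prop := Aᵀ * A = 1 ∧ A.det = 1

def se23mk (A : Mat3) (a b : V3) : Mat5 :=
  Matrix.of fun i j =>
    if hi : (i : ℕ) < 3 then
      if hj : (j : ℕ) < 3 then A ⟨(i : ℕ), hi⟩ ⟨(j : ℕ), hj⟩
      else if (j : ℕ) = 3 then a ⟨(i : ℕ), hi⟩ else b ⟨(i : ℕ), hi⟩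
    else if (i : ℕ) = (j : ℕ) then 1 else 0

def SE23 (C : Mat5) : Prop := ∃ (A : Mat3) (a b : V3), SO3 A ∧ C = se23mk A a b

/-- Rotation block: upper-left 3×3 block of a 5×5 matrix. -/
def rotB (C : Mat5) : Mat3 :=
  Matrix.of fun i j => C (Fin.castLE (by norm_num) i) (Fin.castLE (by norm_num) j)

/-- `A * (γ₁, γ₂) = (A γ₁, A γ₂)`. -/
def star3 (A : Mat3) (γ : V3 × V3) : V3 × V3 := (A *ᵥ γ.1, A *ᵥ γ.2)

/-- The product of the Two-Frame group `C = SO(3) ⋉ (ℝ⁶ ⊕ ℝ⁶)`: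
`(C_X, γ_X)(C_Y, γ_Y) = (C_X C_Y, γ_X + A_X * γ_Y)` where `A_X` is the rotation
block of `C_X`. -/
def tfMul (X Y : Mat5 × (V3 × V3)) : Mat5 × (V3 × V3) :=
  (X.1 * Y.1, X.2 + star3 (rotB X.1) Y.2)

/-- The action `φ((C, γ), (P, b)) = (P C, Aᵀ * (b − γ))` of the Two-Frame group on
`M = SE₂(3) × (ℝ³ × ℝ³)`, with `A` the rotation block of `C`. -/
def phiTF (C : Mat5) (γ : V3 × V3) (P : Mat5) (b : V3 × V3) : Mat5 × (V3 × V3) :=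
  (P * C, star3 (rotB C)ᵀ (b - γ))

lemma rotB_se23mk (A : Mat3) (a b : V3) : rotB (se23mk A a b) = A := by
  ext i j
  fin_cases i <;> fin_cases j <;> rfl

lemma se23mk_one : se23mk 1 0 0 = (1 : Mat5) := by
  ext i j
  fin_cases i <;> fin_cases j <;>
    norm_num [se23mk, Matrix.one_apply, Fin.ext_iff]

set_option maxHeartbeats 2000000 in
lemma se23mk_mul (A A' : Mat3) (a b a' b' : V3) :
    se23mk A a b * se23mk A' a' b' =
      se23mk (A * A') (A *ᵥ a' + a) (A *ᵥ b' + b) := by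
  ext i j
  rw [Matrix.mul_apply, Fin.sum_univ_five]
  fin_cases i <;> fin_cases j <;>
    norm_num [se23mk, Matrix.mul_apply, Fin.sum_univ_three,
      Matrix.mulVec, dotProduct, show ((3:Fin 5):ℕ) = 3 from rfl,
      show ((4:Fin 5):ℕ) = 4 from rfl, show ((2:Fin 5):ℕ) = 2 from rfl,
      show ((2:Fin 3):ℕ) = 2 from rfl, Fin.ext_iff] <;> first | rfl | ring

lemma so3_mul {A B : Mat3} (hA : SO3 A) (hB : SO3 B) : SO3 (A * B) := by
  constructor
  · rw [Matrix.transpose_mul, Matrix.mul_assoc, ← Matrix.mul_assoc Aᵀ, hA.1,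
      Matrix.one_mul, hB.1]
  · rw [Matrix.det_mul, hA.2, hB.2, one_mul]

lemma so3_mul_self_transpose {A : Mat3} (hA : SO3 A) : A * Aᵀ = 1 :=
  mul_eq_one_comm.mp hA.1

lemma so3_transpose {A : Mat3} (hA : SO3 A) : SO3 Aᵀ := by
  refine ⟨?_, by rw [Matrix.det_transpose, hA.2]⟩
  rw [Matrix.transpose_transpose]
  exact so3_mul_self_transpose hA

lemma se23_mul {P Q : Mat5} (hP : SE23 P) (hQ : SE23 Q) : SE23 (P * Q) := by
  obtain ⟨A, a, b, hA, rfl⟩ := hP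
  obtain ⟨A', a', b', hA', rfl⟩ := hQ
  exact ⟨A * A', A *ᵥ a' + a, A *ᵥ b' + b, so3_mul hA hA', se23mk_mul ..⟩

lemma star3_comp (M N : Mat3) (x : V3 × V3) :
    star3 M (star3 N x) = star3 (M * N) x := by
  simp [star3]

lemma star3_one (x : V3 × V3) : star3 1 x = x := by
  simp [star3]

lemma star3_sub (M : Mat3) (x y : V3 × V3) :
    star3 M (x - y) = star3 M x - star3 M y := by
  simp [star3, Prod.ext_iff, Matrix.mulVec_sub]

/-- `φ` is a transitive right group action of the Two-Frame group
`C = SO(3) ⋉ (ℝ⁶ ⊕ ℝ⁶)` on `M = SE₂(3) × (ℝ³ × ℝ³)`. -/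
theorem stmt4 :
    -- φ maps M into M
    (∀ (C : Mat5) (γ : V3 × V3) (P : Mat5) (b : V3 × V3),
      SE23 C → SE23 P → SE23 (phiTF C γ P b).1) ∧
    -- identity axiom: φ((I₅, 0), ξ) = ξ
    (∀ (P : Mat5) (b : V3 × V3), SE23 P → phiTF 1 0 P b = (P, b)) ∧
    -- compatibility axiom: φ(X, φ(Y, ξ)) = φ(Y X, ξ)
    (∀ (CX : Mat5) (γX : V3 × V3) (CY : Mat5) (γY : V3 × V3)
        (P : Mat5) (b : V3 × V3), SE23 CX → SE23 CY → SE23 P →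
      phiTF CX γX (phiTF CY γY P b).1 (phiTF CY γY P b).2
        = phiTF (tfMul (CY, γY) (CX, γX)).1 (tfMul (CY, γY) (CX, γX)).2 P b) ∧
    -- transitivity
    (∀ (P₁ : Mat5) (b₁ : V3 × V3) (P₂ : Mat5) (b₂ : V3 × V3),
      SE23 P₁ → SE23 P₂ →
      ∃ (C : Mat5) (γ : V3 × V3), SE23 C ∧ phiTF C γ P₁ b₁ = (P₂, b₂)) := by
  refine ⟨?_, ?_, ?_, ?_⟩
  · intro C γ P b hC hP
    exact se23_mul hP hC
  · intro P b _
    have h1 : rotB (1 : Mat5) = 1 := by rw [← se23mk_one, rotB_se23mk]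
    simp [phiTF, h1, Matrix.transpose_one, star3_one]
  · intro CX γX CY γY P b hCX hCY _
    obtain ⟨AX, aX, bX, hAX, rfl⟩ := hCX
    obtain ⟨AY, aY, bY, hAY, rfl⟩ := hCY
    simp only [phiTF, tfMul, se23mk_mul, rotB_se23mk]
    refine Prod.ext ?_ ?_
    · show P * se23mk AY aY bY * se23mk AX aX bX
        = P * se23mk (AY * AX) (AY *ᵥ aX + aY) (AY *ᵥ bX + bY)
      rw [← se23mk_mul, Matrix.mul_assoc]
    · show star3 AXᵀ (star3 AYᵀ (b - γY) - γX)
        = star3 (AY * AX)ᵀ (b - (γY + star3 AY γX))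
      conv_rhs => rw [Matrix.transpose_mul, sub_add_eq_sub_sub, ← star3_comp,
        star3_sub AYᵀ, star3_comp AYᵀ AY, hAY.1, star3_one]
  · intro P₁ b₁ P₂ b₂ hP₁ hP₂
    obtain ⟨A₁, a₁, c₁, hA₁, rfl⟩ := hP₁
    obtain ⟨A₂, a₂, c₂, hA₂, rfl⟩ := hP₂
    set Q : Mat5 := se23mk A₁ᵀ (-(A₁ᵀ *ᵥ a₁)) (-(A₁ᵀ *ᵥ c₁)) with hQ
    have hPQ : se23mk A₁ a₁ c₁ * Q = 1 := by
      rw [hQ, se23mk_mul]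
      simp only [Matrix.mulVec_neg, Matrix.mulVec_mulVec,
        so3_mul_self_transpose hA₁, Matrix.one_mulVec, neg_add_cancel]
      exact se23mk_one
    refine ⟨Q * se23mk A₂ a₂ c₂, b₁ - star3 (rotB (Q * se23mk A₂ a₂ c₂)) b₂,
      se23_mul ⟨A₁ᵀ, _, _, so3_transpose hA₁, rfl⟩ ⟨A₂, a₂, c₂, hA₂, rfl⟩, ?_⟩
    have hrot : rotB (Q * se23mk A₂ a₂ c₂) = A₁ᵀ * A₂ := by
      rw [hQ, se23mk_mul, rotB_se23mk]
    have hso : SO3 (A₁ᵀ * A₂) := so3_mul (so3_transpose hA₁) hA₂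
    refine Prod.ext ?_ ?_
    · show se23mk A₁ a₁ c₁ * (Q * se23mk A₂ a₂ c₂) = se23mk A₂ a₂ c₂
      rw [← Matrix.mul_assoc, hPQ, Matrix.one_mul]
    · show star3 (rotB (Q * se23mk A₂ a₂ c₂))ᵀ
        (b₁ - (b₁ - star3 (rotB (Q * se23mk A₂ a₂ c₂)) b₂)) = b₂
      rw [sub_sub_cancel, hrot, star3_comp, hso.1, star3_one]
end
end

section
/- Let L = se(3) × ℝ³ × se(3) (triples (W, ν, T)) and let A = (SE(3) ⋉ se(3)) × ℝ³ be the group of triples (B, β, c) with B ∈ SE(3), β ∈ se(3), c ∈ ℝ³ and product (B_X, β_X, c_X)(B_Y, β_Y, c_Y) = (B_X B_Y, β_X + B_X β_Y B_X⁻¹, c_X + c_Y). Then the map ψ : A × L → L defined by ψ((B, β, c), (W, ν, T)) = (B⁻¹ (W − β) B, Aᵀ (ν − a), B⁻¹ T B), where (A, a) are the rotation and translation blocks of B, is a right group action of A on L. -/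
open Matrix

noncomputable section

abbrev Mat4 := Matrix (Fin 4) (Fin 4) ℝ

/-- The 4×4 block matrix `[[A, a], [0, 1]]`. -/
def se3mk (A : Mat3) (a : V3) : Mat4 :=
  Matrix.of fun i j =>
    if hi : (i : ℕ) < 3 then
      if hj : (j : ℕ) < 3 then A ⟨(i : ℕ), hi⟩ ⟨(j : ℕ), hj⟩
      else a ⟨(i : ℕ), hi⟩
    else if (i : ℕ) = (j : ℕ) then 1 else 0

/-- `SE(3)` (the homogeneous Galilean group `HG(3)` of the paper): 4×4 block matrices
`[[A, a], [0, 1]]` with `A ∈ SO(3)`, `a ∈ ℝ³`. -/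
def SE3 (B : Mat4) : Prop := ∃ (A : Mat3) (a : V3), SO3 A ∧ B = se3mk A a

/-- `x^∧`: the 3×3 skew-symmetric matrix with `x^∧ y = x × y`. -/
def wedge (x : V3) : Mat3 :=
  !![0, -x 2, x 1; x 2, 0, -x 0; -x 1, x 0, 0]

/-- The 4×4 block matrix `[[ω^∧, u], [0, 0]]`. -/
def se3algMk (ω u : V3) : Mat4 :=
  Matrix.of fun i j =>
    if hi : (i : ℕ) < 3 then
      if hj : (j : ℕ) < 3 then wedge ω ⟨(i : ℕ), hi⟩ ⟨(j : ℕ), hj⟩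
      else u ⟨(i : ℕ), hi⟩
    else 0

/-- `se(3)`: 4×4 block matrices `[[ω^∧, u], [0, 0]]` with `ω, u ∈ ℝ³`. -/
def se3Alg (M : Mat4) : Prop := ∃ ω u : V3, M = se3algMk ω u

/-- The rotation block `A` of `B ∈ SE(3)`: its upper-left 3×3 block. -/
def rotB4 (B : Mat4) : Mat3 :=
  Matrix.of fun i j => B (Fin.castLE (by norm_num) i) (Fin.castLE (by norm_num) j)

/-- The translation column `a` of `B ∈ SE(3)`: the first three entries of its
last column. -/
def transB4 (B : Mat4) : V3 := fun i => B (Fin.castLE (by norm_num) i) 3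

/-- The product of the group `A = (SE(3) ⋉ se(3)) × ℝ³`:
`(B_X, β_X, c_X)(B_Y, β_Y, c_Y) = (B_X B_Y, β_X + B_X β_Y B_X⁻¹, c_X + c_Y)`. -/
def dpMul (X Y : Mat4 × Mat4 × V3) : Mat4 × Mat4 × V3 :=
  (X.1 * Y.1, X.2.1 + X.1 * Y.2.1 * X.1⁻¹, X.2.2 + Y.2.2)

/-- The action `ψ((B, β, c), (W, ν, T)) = (B⁻¹ (W − β) B, Aᵀ (ν − a), B⁻¹ T B)` of
`A = (SE(3) ⋉ se(3)) × ℝ³` on the input space `L = se(3) × ℝ³ × se(3)`, where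
`(A, a)` are the rotation and translation blocks of `B`. -/
def psiDP (B β : Mat4) (c : V3) (W : Mat4) (ν : V3) (T : Mat4) :
    Mat4 × V3 × Mat4 :=
  (B⁻¹ * (W - β) * B, (rotB4 B)ᵀ *ᵥ (ν - transB4 B), B⁻¹ * T * B)

lemma fin43 : ((3 : Fin 4) : ℕ) = 3 := rfl

lemma se3mk_mul (A A' : Mat3) (a a' : V3) :
    se3mk A a * se3mk A' a' = se3mk (A * A') (A *ᵥ a' + a) := by
  ext i j
  fin_cases i <;> fin_cases j <;>
    simp [se3mk, Matrix.mul_apply, Fin.sum_univ_four, Fin.sum_univ_three,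
      Matrix.mulVec, dotProduct, fin43, Fin.isValue]

lemma se3mk_one : se3mk 1 0 = (1 : Mat4) := by
  ext i j
  fin_cases i <;> fin_cases j <;>
    simp [se3mk, Matrix.one_apply, fin43, Fin.isValue]

lemma rotB4_se3mk (A : Mat3) (a : V3) : rotB4 (se3mk A a) = A := by
  ext i j
  fin_cases i <;> fin_cases j <;> simp [rotB4, se3mk, fin43, Fin.isValue]

lemma transB4_se3mk (A : Mat3) (a : V3) : transB4 (se3mk A a) = a := by
  ext i
  fin_cases i <;> simp [transB4, se3mk, fin43, Fin.isValue]

lemma se3mk_mul_inv {A : Mat3} (hA : Aᵀ * A = 1) (a : V3) :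
    se3mk A a * se3mk Aᵀ (-(Aᵀ *ᵥ a)) = 1 := by
  have hAA : A * Aᵀ = 1 := mul_eq_one_comm.mp hA
  rw [se3mk_mul, hAA, Matrix.mulVec_neg, Matrix.mulVec_mulVec, hAA,
    Matrix.one_mulVec, neg_add_cancel, se3mk_one]

lemma se3mk_inv {A : Mat3} (hA : Aᵀ * A = 1) (a : V3) :
    (se3mk A a)⁻¹ = se3mk Aᵀ (-(Aᵀ *ᵥ a)) :=
  Matrix.inv_eq_right_inv (se3mk_mul_inv hA a)

/-- `ψ` is a right group action of `A = (SE(3) ⋉ se(3)) × ℝ³` on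
`L = se(3) × ℝ³ × se(3)`. -/
theorem stmt9 :
    -- identity axiom: ψ((I₄, 0, 0), u) = u
    (∀ (W : Mat4) (ν : V3) (T : Mat4), se3Alg W → se3Alg T →
      psiDP 1 0 0 W ν T = (W, ν, T)) ∧
    -- compatibility axiom: ψ(X, ψ(Y, u)) = ψ(Y X, u)
    (∀ (BX βX : Mat4) (cX : V3) (BY βY : Mat4) (cY : V3)
        (W : Mat4) (ν : V3) (T : Mat4),
      SE3 BX → se3Alg βX → SE3 BY → se3Alg βY → se3Alg W → se3Alg T →
      psiDP BX βX cX (psiDP BY βY cY W ν T).1 (psiDP BY βY cY W ν T).2.1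
        (psiDP BY βY cY W ν T).2.2
        = psiDP (dpMul (BY, βY, cY) (BX, βX, cX)).1
            (dpMul (BY, βY, cY) (BX, βX, cX)).2.1
            (dpMul (BY, βY, cY) (BX, βX, cX)).2.2 W ν T) := by
  constructor
  · intro W ν T _ _
    have h1 : rotB4 (1 : Mat4) = 1 := by rw [← se3mk_one, rotB4_se3mk]
    have h2 : transB4 (1 : Mat4) = 0 := by rw [← se3mk_one, transB4_se3mk]
    have h0 : (1 : Mat4)⁻¹ = 1 := Matrix.inv_eq_right_inv (by simp)
    simp [psiDP, h0, h1, h2]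
  · rintro BX βX cX BY βY cY W ν T ⟨AX, aX, hAX, rfl⟩ _ ⟨AY, aY, hAY, rfl⟩ _ _ _
    have hiX := se3mk_mul_inv hAX.1 aX
    have hiY := se3mk_mul_inv hAY.1 aY
    have invX : Invertible (se3mk AX aX) := invertibleOfRightInverse _ _ hiX
    have invY : Invertible (se3mk AY aY) := invertibleOfRightInverse _ _ hiY
    refine Prod.ext ?_ (Prod.ext ?_ ?_)
    · simp only [psiDP, dpMul, Matrix.mul_inv_rev, Matrix.mul_sub,
        Matrix.sub_mul, Matrix.mul_assoc,
        Matrix.add_mul, Matrix.mul_add,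
        Matrix.inv_mul_cancel_left_of_invertible,
        Matrix.mul_inv_cancel_left_of_invertible]
      abel
    · simp only [psiDP, dpMul, se3mk_mul, rotB4_se3mk, transB4_se3mk,
        Matrix.transpose_mul, Matrix.mulVec_sub, Matrix.mulVec_mulVec]
      have h : (AXᵀ * AYᵀ) * AY = AXᵀ := by
        rw [Matrix.mul_assoc, hAY.1, Matrix.mul_one]
      rw [Matrix.mulVec_add, Matrix.mulVec_mulVec, h]
      abel
    · simp only [psiDP, dpMul, Matrix.mul_inv_rev, Matrix.mul_assoc]
end
end

section
/- Let ω, bω, b̂ω ∈ ℝ³ be constant and let R, R̂ : ℝ → M₃(ℝ) and p, p̂, v, v̂ : ℝ → ℝ³ be differentiable functions satisfying Ṙ = R(ω − bω)^∧, R̂̇ = R̂(ω − b̂ω)^∧, ṗ = v, p̂̇ = v̂, with R̂(t) ∈ SO(3) for all t. Then the invariant position error e_p(t) = p(t) − R(t) R̂(t)ᵀ p̂(t) satisfies the exact differential equation ė_p(t) = e_R(t)(R̂(t)(bω − b̂ω))^∧ p̂(t) + e_v(t) for all t, where e_R = R R̂ᵀ and e_v = v − R R̂ᵀ v̂. -/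
open Matrix

noncomputable section

attribute [local instance] Matrix.normedAddCommGroup Matrix.normedSpace

lemma wedge_sub (a b : V3) : wedge (a - b) = wedge a - wedge b := by
  ext i j; fin_cases i <;> fin_cases j <;> simp [wedge] <;> ring

lemma wedge_transpose (x : V3) : (wedge x)ᵀ = -wedge x := by
  ext i j; fin_cases i <;> fin_cases j <;> simp [wedge]

lemma conj_wedge (A : Mat3) (x : V3) :
    Aᵀ * wedge (A *ᵥ x) * A = A.det • wedge x := by
  ext i j
  fin_cases i <;> fin_cases j <;>
    simp [wedge, Matrix.mul_apply, Matrix.mulVec, dotProduct,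
      Matrix.det_fin_three, Fin.sum_univ_three] <;> ring

lemma hasDerivAt_entry {M : ℝ → Mat3} {M' : Mat3} {t : ℝ}
    (h : HasDerivAt M M' t) (i j : Fin 3) :
    HasDerivAt (fun s => M s i j) (M' i j) t := by
  have h1 : HasDerivAt (fun s => M s i) (M' i) t := hasDerivAt_pi.mp h i
  exact hasDerivAt_pi.mp h1 j

lemma hasDerivAt_mulVec {M : ℝ → Mat3} {M' : Mat3} {u : ℝ → V3} {u' : V3} {t : ℝ}
    (hM : HasDerivAt M M' t) (hu : HasDerivAt u u' t) :
    HasDerivAt (fun s => M s *ᵥ u s) (M' *ᵥ u t + M t *ᵥ u') t := by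
  rw [hasDerivAt_pi]
  intro i
  have : ∀ s, (M s *ᵥ u s) i = ∑ j, M s i j * u s j := by
    intro s; simp [Matrix.mulVec, dotProduct]
  simp only [this]
  have : HasDerivAt (fun s => ∑ j, M s i j * u s j)
      (∑ j, (M' i j * u t j + M t i j * u' j)) t :=
    HasDerivAt.fun_sum fun j _ =>
      (hasDerivAt_entry hM i j).mul (hasDerivAt_pi.mp hu j)
  convert this using 1
  · rfl
  · rfl
  simp [Matrix.mulVec, dotProduct, Finset.sum_add_distrib]

lemma hasDerivAt_matmul {M N : ℝ → Mat3} {M' N' : Mat3} {t : ℝ}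
    (hM : HasDerivAt M M' t) (hN : HasDerivAt N N' t) :
    HasDerivAt (fun s => M s * N s) (M' * N t + M t * N') t := by
  refine hasDerivAt_pi.mpr ?_; intro i
  rw [hasDerivAt_pi]; intro j
  have : HasDerivAt (fun s => ∑ k, M s i k * N s k j)
      (∑ k, (M' i k * N t k j + M t i k * N' k j)) t :=
    HasDerivAt.fun_sum fun k _ =>
      (hasDerivAt_entry hM i k).mul (hasDerivAt_entry hN k j)
  have e1 : (fun s => (M s * N s) i j) = fun s => ∑ k, M s i k * N s k j := by
    funext s; simp [Matrix.mul_apply]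
  rw [e1]
  convert this using 1
  · rfl
  · rfl
  simp [Matrix.mul_apply, Finset.sum_add_distrib]

lemma hasDerivAt_transpose {M : ℝ → Mat3} {M' : Mat3} {t : ℝ}
    (hM : HasDerivAt M M' t) :
    HasDerivAt (fun s => (M s)ᵀ) M'ᵀ t := by
  refine hasDerivAt_pi.mpr ?_; intro i
  rw [hasDerivAt_pi]; intro j
  exact hasDerivAt_entry hM j i

/-- If `Ṙ = R (ω − bω)^∧`, `R̂̇ = R̂ (ω − b̂ω)^∧`, `ṗ = v` and `p̂̇ = v̂` with
`R̂(t) ∈ SO(3)`, then the invariant position error `e_p = p − R R̂ᵀ p̂` satisfies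
`ė_p = e_R (R̂(bω − b̂ω))^∧ p̂ + e_v` exactly, where `e_R = R R̂ᵀ` and
`e_v = v − R R̂ᵀ v̂`. -/
theorem stmt17 (ω bω bωh : V3) (R Rh : ℝ → Mat3) (p ph v vh : ℝ → V3)
    (hR : ∀ t, HasDerivAt R (R t * wedge (ω - bω)) t)
    (hRh : ∀ t, HasDerivAt Rh (Rh t * wedge (ω - bωh)) t)
    (hp : ∀ t, HasDerivAt p (v t) t)
    (hph : ∀ t, HasDerivAt ph (vh t) t)
    (hSO : ∀ t, SO3 (Rh t)) :
    ∀ t, HasDerivAt (fun s => p s - (R s * (Rh s)ᵀ) *ᵥ ph s)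
      (((R t * (Rh t)ᵀ) * wedge (Rh t *ᵥ (bω - bωh))) *ᵥ ph t +
        (v t - (R t * (Rh t)ᵀ) *ᵥ vh t)) t := by
  intro t
  obtain ⟨hO, hdet⟩ := hSO t
  have hO' : Rh t * (Rh t)ᵀ = 1 := mul_eq_one_comm.mp hO
  have hconj : wedge (Rh t *ᵥ (bω - bωh)) = Rh t * wedge (bω - bωh) * (Rh t)ᵀ := by
    have h := conj_wedge (Rh t) (bω - bωh)
    rw [hdet, one_smul] at h
    rw [← h]
    simp only [← Matrix.mul_assoc]
    rw [hO', Matrix.one_mul, Matrix.mul_assoc _ (Rh t), hO', Matrix.mul_one]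
  have key : (R t * (Rh t)ᵀ) * wedge (Rh t *ᵥ (bω - bωh)) =
      - (R t * wedge (ω - bω) * (Rh t)ᵀ + R t * (Rh t * wedge (ω - bωh))ᵀ) := by
    rw [hconj, Matrix.transpose_mul, wedge_transpose]
    have hsplit : wedge (bω - bωh) = wedge (ω - bωh) - wedge (ω - bω) := by
      rw [← wedge_sub]; funext i; simp
    simp only [← Matrix.mul_assoc]
    rw [Matrix.mul_assoc (R t) (Rh t)ᵀ (Rh t), hO, Matrix.mul_one, hsplit]
    noncomm_ring
  have hd := (hp t).sub (hasDerivAt_mulVec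
    (hasDerivAt_matmul (hR t) (hasDerivAt_transpose (hRh t))) (hph t))
  convert hd using 1
  · rfl
  · rfl
  · rfl
  · rfl
  rw [key, Matrix.neg_mulVec, Matrix.add_mulVec]
  abel
end
end

section
/- Let W, G, D be fixed real n×n matrices and let B, B̂ : ℝ → Mₙ(ℝ) be continuous matrix-valued functions. Suppose P, P̂ : ℝ → Mₙ(ℝ) are differentiable with P̂(t) invertible for all t, and satisfy Ṗ(t) = P(t)(W − B(t) + D) + (G − D)P(t) and P̂̇(t) = P̂(t)(W − B̂(t) + D) + (G − D)P̂(t). Then the error e_T(t) = P(t) P̂(t)⁻¹ satisfies the exact differential equation ė_T(t) = e_T(t) · P̂(t)(B̂(t) − B(t))P̂(t)⁻¹ + (G − D) e_T(t) − e_T(t)(G − D) for all t. -/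
open Matrix

noncomputable section

attribute [local instance] Matrix.normedAddCommGroup Matrix.normedSpace

private theorem hasDerivAt_entrywise {n : ℕ} {A : ℝ → Matrix (Fin n) (Fin n) ℝ}
    {A' : Matrix (Fin n) (Fin n) ℝ} {t : ℝ} :
    HasDerivAt A A' t ↔ ∀ i j, HasDerivAt (fun s => A s i j) (A' i j) t := by
  refine hasDerivAt_pi.trans ?_
  exact forall_congr' fun i => hasDerivAt_pi

private theorem matrix_mul_hasDerivAt {n : ℕ} {A Bm : ℝ → Matrix (Fin n) (Fin n) ℝ}
    {A' B' : Matrix (Fin n) (Fin n) ℝ} {t : ℝ}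
    (hA : HasDerivAt A A' t) (hB : HasDerivAt Bm B' t) :
    HasDerivAt (fun s => A s * Bm s) (A' * Bm t + A t * B') t := by
  rw [hasDerivAt_entrywise] at hA hB ⊢
  intro i j
  have : ∀ s, (A s * Bm s) i j = ∑ k, A s i k * Bm s k j := fun s => Matrix.mul_apply
  simp only [this]
  have hsum : HasDerivAt (fun s => ∑ k, A s i k * Bm s k j)
      (∑ k, (A' i k * Bm t k j + A t i k * B' k j)) t :=
    HasDerivAt.fun_sum fun k _ => (hA i k).mul (hB k j)
  convert hsum using 1
  rw [Matrix.add_apply, Matrix.mul_apply, Matrix.mul_apply, ← Finset.sum_add_distrib]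

private theorem det_differentiableAt {n : ℕ} {M : ℝ → Matrix (Fin n) (Fin n) ℝ} {t : ℝ}
    (h : ∀ i j, DifferentiableAt ℝ (fun s => M s i j) t) :
    DifferentiableAt ℝ (fun s => (M s).det) t := by
  simp only [Matrix.det_apply']
  exact DifferentiableAt.fun_sum fun σ _ =>
    ((DifferentiableAt.fun_finsetProd fun i _ => h (σ i) i).const_mul _)

/-- For n×n matrix curves satisfying `Ṗ = P(W − B + D) + (G − D)P` and
`P̂̇ = P̂(W − B̂ + D) + (G − D)P̂` with `B, B̂` continuous and `P̂(t)` invertible for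
all `t`, the error `e_T = P P̂⁻¹` satisfies the exact differential equation
`ė_T = e_T · P̂(B̂ − B)P̂⁻¹ + (G − D) e_T − e_T (G − D)`. -/
theorem stmt18 {n : ℕ} (W G D : Matrix (Fin n) (Fin n) ℝ)
    (B Bh : ℝ → Matrix (Fin n) (Fin n) ℝ)
    (hB : Continuous B) (hBh : Continuous Bh)
    (P Ph : ℝ → Matrix (Fin n) (Fin n) ℝ)
    (hPinv : ∀ t, IsUnit (Ph t))
    (hP : ∀ t, HasDerivAt P (P t * (W - B t + D) + (G - D) * P t) t)
    (hPh : ∀ t, HasDerivAt Ph (Ph t * (W - Bh t + D) + (G - D) * Ph t) t) :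
    ∀ t, HasDerivAt (fun s => P s * (Ph s)⁻¹)
      (P t * (Ph t)⁻¹ * (Ph t * (Bh t - B t) * (Ph t)⁻¹) +
        ((G - D) * (P t * (Ph t)⁻¹) - P t * (Ph t)⁻¹ * (G - D))) t := by
  intro t
  set Q : ℝ → Matrix (Fin n) (Fin n) ℝ := fun s => (Ph s)⁻¹ with hQdef
  -- entrywise differentiability of Ph
  have hPhE : ∀ s i j, DifferentiableAt ℝ (fun u => Ph u i j) s := fun s i j =>
    (hasDerivAt_entrywise.mp (hPh s) i j).differentiableAt
  -- det is nonzero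
  have hdet : ∀ s, (Ph s).det ≠ 0 := fun s =>
    IsUnit.ne_zero ((Matrix.isUnit_iff_isUnit_det (Ph s)).mp (hPinv s))
  -- Q is differentiable entrywise
  have hQE : ∀ s i j, DifferentiableAt ℝ (fun u => Q u i j) s := by
    intro s i j
    have heq : ∀ u, Q u i j = (Ph u).det⁻¹ * (Ph u).adjugate i j := by
      intro u
      show (Ph u)⁻¹ i j = _
      rw [Matrix.inv_def, Matrix.smul_apply, Ring.inverse_eq_inv, smul_eq_mul]
    simp only [heq]
    have hd : DifferentiableAt ℝ (fun u => (Ph u).det) s := det_differentiableAt (hPhE s)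
    have hadj : DifferentiableAt ℝ (fun u => (Ph u).adjugate i j) s := by
      have : ∀ u, (Ph u).adjugate i j = ((Ph u).updateRow j (Pi.single i 1)).det := fun u =>
        Matrix.adjugate_apply _ _ _
      simp only [this]
      refine det_differentiableAt fun a b => ?_
      by_cases hab : a = j
      · subst hab
        simp only [Matrix.updateRow_self]
        exact differentiableAt_const _
      · simp only [Matrix.updateRow_ne hab]
        exact hPhE s a b
    exact (hd.inv (hdet s)).mul hadj
  -- Q differentiable as a matrix curve
  have hQdiff : DifferentiableAt ℝ Q t := by
    refine differentiableAt_pi.2 ?_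
    intro i
    refine differentiableAt_pi.2 ?_
    intro j
    exact hQE t i j
  obtain ⟨Q', hQ⟩ : ∃ Q', HasDerivAt Q Q' t := ⟨deriv Q t, hQdiff.hasDerivAt⟩
  -- identity Ph * Q = 1 gives formula for Q'
  have hdetU : ∀ s, IsUnit (Ph s).det := fun s =>
    (Matrix.isUnit_iff_isUnit_det (Ph s)).mp (hPinv s)
  have hPF : Ph t * Q t = 1 := Matrix.mul_nonsing_inv _ (hdetU t)
  have hFP : Q t * Ph t = 1 := Matrix.nonsing_inv_mul _ (hdetU t)
  have hc1 : ∀ X : Matrix (Fin n) (Fin n) ℝ, Q t * (Ph t * X) = X := fun X => by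
    rw [← Matrix.mul_assoc, hFP, Matrix.one_mul]
  set Ph' := Ph t * (W - Bh t + D) + (G - D) * Ph t with hPh'def
  have hone : HasDerivAt (fun s => Ph s * Q s) (Ph' * Q t + Ph t * Q') t :=
    matrix_mul_hasDerivAt (hPh t) hQ
  have hone' : (fun s => Ph s * Q s) = fun _ => (1 : Matrix (Fin n) (Fin n) ℝ) := by
    funext s
    exact Matrix.mul_nonsing_inv _ (hdetU s)
  rw [hone'] at hone
  have hzero : Ph' * Q t + Ph t * Q' = 0 :=
    hone.unique (hasDerivAt_const t 1)
  have hQ' : Q' = -(Q t * (Ph' * Q t)) := by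
    have h1 : Q t * (Ph' * Q t + Ph t * Q') = 0 := by rw [hzero, Matrix.mul_zero]
    rw [Matrix.mul_add, hc1] at h1
    exact eq_neg_of_add_eq_zero_right h1
  -- main derivative
  have hmain : HasDerivAt (fun s => P s * Q s)
      ((P t * (W - B t + D) + (G - D) * P t) * Q t + P t * Q') t :=
    matrix_mul_hasDerivAt (hP t) hQ
  convert hmain using 1
  rw [hQ', hPh'def]
  have hQQ : (Ph t)⁻¹ = Q t := rfl
  simp only [hQQ, Matrix.mul_add, Matrix.add_mul, Matrix.mul_sub, Matrix.sub_mul,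
    Matrix.mul_assoc, hc1, hPF, Matrix.mul_neg, Matrix.neg_mul, Matrix.mul_one]
  abel
end
end
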